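/- Let φ be the discrete Gaussian free field on Λ_N with zero boundary conditions, A ⊆ Λ_N, and a > 0. Then P_N(φ(x) ≥ 0 for all x ∈ Λ_N \ A | φ(y) ∈ [0,a] for all y ∈ A) ≥ P_{Λ_N \ A}(φ(x) ≥ 0 for all x ∈ Λ_N \ A), where P_{Λ_N \ A} is the law of the zero-boundary GFF on Λ_N \ A. -/

import Mathlib

open MeasureTheory Real Finset

noncomputable section

/-- The nearest neighbours of a point of `ℤ^d`. -/
def nbrs (d : ℕ) (x : Fin d → ℤ) : Finset (Fin d → ℤ) :=
  (Finset.univ : Finset (Fin d × Bool)).image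
    (fun p => Function.update x p.1 (x p.1 + if p.2 then 1 else -1))

/-- Outer boundary of a finite subset of `ℤ^d`. -/
def bdry (d : ℕ) (A : Finset (Fin d → ℤ)) : Finset (Fin d → ℤ) :=
  A.biUnion (nbrs d) \ A

/-- The Gaussian free field Hamiltonian
`H_A(φ) = (1/8d) ∑_{x,y ∈ A ∪ ∂A, |x-y| = 1} (φ x - φ y)²`. -/
def ham (d : ℕ) (A : Finset (Fin d → ℤ)) (φ : (Fin d → ℤ) → ℝ) : ℝ :=
  (1 / (8 * d)) * ∑ x ∈ A ∪ bdry d A, ∑ y ∈ A ∪ bdry d A,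
    if y ∈ nbrs d x then (φ x - φ y) ^ 2 else 0

/-- Extension of a field on `A` by zero boundary conditions. -/
def extz {d : ℕ} (A : Finset (Fin d → ℤ)) (ψ : A → ℝ) : (Fin d → ℤ) → ℝ :=
  fun x => if h : x ∈ A then ψ ⟨x, h⟩ else 0

/-- Unnormalized density of the zero-boundary GFF on `A`. -/
def gffDensity (d : ℕ) (A : Finset (Fin d → ℤ)) (ψ : A → ℝ) : ℝ :=
  Real.exp (-ham d A (extz A ψ))

/-- Partition function of the zero-boundary GFF on `A`. -/
def gffZ (d : ℕ) (A : Finset (Fin d → ℤ)) : ℝ :=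
  ∫ ψ : A → ℝ, gffDensity d A ψ

/-- The zero-boundary Gaussian free field measure on `A ⊂ ℤ^d`. -/
def gff (d : ℕ) (A : Finset (Fin d → ℤ)) : Measure (A → ℝ) :=
  (ENNReal.ofReal (gffZ d A))⁻¹ •
    volume.withDensity (fun ψ => ENNReal.ofReal (gffDensity d A ψ))

/-- The box `Λ_N = {-⌊N/2⌋, …, ⌊N/2⌋}^d`. -/
def box (d N : ℕ) : Finset (Fin d → ℤ) :=
  Fintype.piFinset (fun _ => Finset.Icc (-(N / 2 : ℤ)) (N / 2 : ℤ))

/-- Unnormalized density of the square-well pinned field on `Λ_N`. -/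
def pinDensity (d N : ℕ) (a b : ℝ) (ψ : box d N → ℝ) : ℝ :=
  Real.exp (-ham d (box d N) (extz (box d N) ψ) +
    b * ∑ x : box d N, (if ψ x ∈ Set.Icc 0 a then (1 : ℝ) else 0))

/-- Partition function of the pinned field. -/
def pinZ (d N : ℕ) (a b : ℝ) : ℝ := ∫ ψ : box d N → ℝ, pinDensity d N a b ψ

/-- The square-well pinning measure `P̃_{N,a,b}` on the box `Λ_N`. -/
def pin (d N : ℕ) (a b : ℝ) : Measure (box d N → ℝ) :=
  (ENNReal.ofReal (pinZ d N a b))⁻¹ •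
    volume.withDensity (fun ψ => ENNReal.ofReal (pinDensity d N a b ψ))

/-- The number of pinned points `ξ̃_N`. -/
def numPinned (d N : ℕ) (a : ℝ) (ψ : box d N → ℝ) : ℕ :=
  (Finset.univ.filter (fun x : box d N => ψ x ∈ Set.Icc 0 a)).card

/-- The hard wall event `Ω⁺_B` within the box, for fields on `Λ_N`: nonnegativity
at every point of `B`. -/
def wallOn (d N : ℕ) (B : Finset (Fin d → ℤ)) : Set (box d N → ℝ) :=
  {ψ | ∀ x : box d N, (x : Fin d → ℤ) ∈ B → 0 ≤ ψ x}

/-- The hard-wall event for the zero-boundary GFF on `A`. -/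
def wall {d : ℕ} (A : Finset (Fin d → ℤ)) : Set (A → ℝ) := {ψ | ∀ x, 0 ≤ ψ x}

end

noncomputable section Aux

variable {d : ℕ}

lemma mem_nbrs_iff {d : ℕ} {x y : Fin d → ℤ} :
    y ∈ nbrs d x ↔ ∃ (i : Fin d) (e : Bool),
      y = Function.update x i (x i + if e then 1 else -1) := by
  simp only [nbrs, Finset.mem_image, Finset.mem_univ, true_and, Prod.exists]
  constructor
  · rintro ⟨i, e, h⟩; exact ⟨i, e, h.symm⟩
  · rintro ⟨i, e, h⟩; exact ⟨i, e, h.symm⟩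

lemma nbrs_comm {d : ℕ} {x y : Fin d → ℤ} (h : y ∈ nbrs d x) : x ∈ nbrs d y := by
  rw [mem_nbrs_iff] at h ⊢
  obtain ⟨i, e, rfl⟩ := h
  refine ⟨i, !e, ?_⟩
  funext j
  by_cases hj : j = i
  · subst hj
    cases e <;> simp [Function.update_self]
  · simp [Function.update_of_ne hj]

def ebil (d : ℕ) (S : Finset (Fin d → ℤ)) (f g : (Fin d → ℤ) → ℝ) : ℝ :=
  ∑ x ∈ S ∪ bdry d S, ∑ y ∈ S ∪ bdry d S,
    if y ∈ nbrs d x then (f x - f y) * (g x - g y) else 0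

lemma ham_eq_ebil (S : Finset (Fin d → ℤ)) (f : (Fin d → ℤ) → ℝ) :
    ham d S f = (1 / (8 * d)) * ebil d S f f := by
  unfold ham ebil
  congr 1
  refine Finset.sum_congr rfl fun x _ => Finset.sum_congr rfl fun y _ => ?_
  split_ifs with h
  · ring
  · rfl

lemma ebil_symm (S : Finset (Fin d → ℤ)) (f g : (Fin d → ℤ) → ℝ) :
    ebil d S f g = ebil d S g f := by
  unfold ebil
  refine Finset.sum_congr rfl fun x _ => Finset.sum_congr rfl fun y _ => ?_
  split_ifs with h
  · ring
  · rfl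

lemma ebil_add_left (S : Finset (Fin d → ℤ)) (f g h : (Fin d → ℤ) → ℝ) :
    ebil d S (f + g) h = ebil d S f h + ebil d S g h := by
  unfold ebil
  rw [← Finset.sum_add_distrib]
  refine Finset.sum_congr rfl fun x _ => ?_
  rw [← Finset.sum_add_distrib]
  refine Finset.sum_congr rfl fun y _ => ?_
  split_ifs with h'
  · simp only [Pi.add_apply]; ring
  · simp

lemma ebil_add_right (S : Finset (Fin d → ℤ)) (f g h : (Fin d → ℤ) → ℝ) :
    ebil d S f (g + h) = ebil d S f g + ebil d S f h := by
  rw [ebil_symm, ebil_add_left, ebil_symm S g f, ebil_symm S h f]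

lemma ebil_smul_left (S : Finset (Fin d → ℤ)) (t : ℝ) (f h : (Fin d → ℤ) → ℝ) :
    ebil d S (t • f) h = t * ebil d S f h := by
  unfold ebil
  rw [Finset.mul_sum]
  refine Finset.sum_congr rfl fun x _ => ?_
  rw [Finset.mul_sum]
  refine Finset.sum_congr rfl fun y _ => ?_
  split_ifs with h'
  · simp only [Pi.smul_apply, smul_eq_mul]; ring
  · simp

lemma ebil_smul_right (S : Finset (Fin d → ℤ)) (t : ℝ) (f h : (Fin d → ℤ) → ℝ) :
    ebil d S f (t • h) = t * ebil d S f h := by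
  rw [ebil_symm, ebil_smul_left, ebil_symm]

lemma ebil_self_nonneg (S : Finset (Fin d → ℤ)) (f : (Fin d → ℤ) → ℝ) :
    0 ≤ ebil d S f f := by
  refine Finset.sum_nonneg fun x _ => Finset.sum_nonneg fun y _ => ?_
  split_ifs
  · exact mul_self_nonneg _
  · exact le_refl 0

lemma nbr_mem_union_bdry {S : Finset (Fin d → ℤ)} {x y : Fin d → ℤ}
    (hx : x ∈ S) (hy : y ∈ nbrs d x) : y ∈ S ∪ bdry d S := by
  by_cases h : y ∈ S
  · exact Finset.mem_union_left _ h
  · exact Finset.mem_union_right _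
      (Finset.mem_sdiff.mpr ⟨Finset.mem_biUnion.mpr ⟨x, hx, hy⟩, h⟩)

lemma union_bdry_subset {B S : Finset (Fin d → ℤ)} (h : B ⊆ S) :
    B ∪ bdry d B ⊆ S ∪ bdry d S := by
  intro z hz
  rcases Finset.mem_union.mp hz with hz | hz
  · exact Finset.mem_union_left _ (h hz)
  · obtain ⟨hz1, _⟩ := Finset.mem_sdiff.mp hz
    obtain ⟨b, hb, hzb⟩ := Finset.mem_biUnion.mp hz1
    exact nbr_mem_union_bdry (h hb) hzb

lemma ebil_restrict {B S : Finset (Fin d → ℤ)} (hBS : B ⊆ S) {f g : (Fin d → ℤ) → ℝ}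
    (hf : ∀ z, z ∉ B → f z = 0) (hg : ∀ z, z ∉ B → g z = 0) :
    ebil d S f g = ebil d B f g := by
  unfold ebil
  have hTB : B ∪ bdry d B ⊆ S ∪ bdry d S := union_bdry_subset hBS
  have inner_eq : ∀ x ∈ B ∪ bdry d B,
      (∑ y ∈ S ∪ bdry d S, if y ∈ nbrs d x then (f x - f y) * (g x - g y) else 0)
      = ∑ y ∈ B ∪ bdry d B, if y ∈ nbrs d x then (f x - f y) * (g x - g y) else 0 := by
    intro x _
    refine (Finset.sum_subset hTB ?_).symm
    intro y _ hyn
    split_ifs with hnb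
    · have hyB : y ∉ B := fun hy => hyn (Finset.mem_union_left _ hy)
      have hxB : x ∉ B := fun hx => hyn (nbr_mem_union_bdry hx hnb)
      rw [hf x hxB, hf y hyB, sub_self, zero_mul]
    · rfl
  calc ∑ x ∈ S ∪ bdry d S, ∑ y ∈ S ∪ bdry d S,
        (if y ∈ nbrs d x then (f x - f y) * (g x - g y) else 0)
      = ∑ x ∈ B ∪ bdry d B, ∑ y ∈ S ∪ bdry d S,
        (if y ∈ nbrs d x then (f x - f y) * (g x - g y) else 0) := by
        refine (Finset.sum_subset hTB ?_).symm
        intro x _ hxn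
        refine Finset.sum_eq_zero fun y _ => ?_
        split_ifs with hnb
        · have hxB : x ∉ B := fun hx => hxn (Finset.mem_union_left _ hx)
          have hyB : y ∉ B := fun hy => hxn (nbr_mem_union_bdry hy (nbrs_comm hnb))
          rw [hf x hxB, hf y hyB, sub_self, zero_mul]
        · rfl
    _ = ∑ x ∈ B ∪ bdry d B, ∑ y ∈ B ∪ bdry d B,
        (if y ∈ nbrs d x then (f x - f y) * (g x - g y) else 0) :=
        Finset.sum_congr rfl inner_eq

lemma ham_nonneg (S : Finset (Fin d → ℤ)) (f : (Fin d → ℤ) → ℝ) : 0 ≤ ham d S f := by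
  rw [ham_eq_ebil]
  have : (0:ℝ) ≤ 1 / (8 * d) := by positivity
  exact mul_nonneg this (ebil_self_nonneg S f)

lemma ham_restrict {B S : Finset (Fin d → ℤ)} (hBS : B ⊆ S) {f : (Fin d → ℤ) → ℝ}
    (hf : ∀ z, z ∉ B → f z = 0) : ham d S f = ham d B f := by
  rw [ham_eq_ebil, ham_eq_ebil, ebil_restrict hBS hf hf]

lemma ham_smul (S : Finset (Fin d → ℤ)) (t : ℝ) (f : (Fin d → ℤ) → ℝ) :
    ham d S (t • f) = t ^ 2 * ham d S f := by
  rw [ham_eq_ebil, ham_eq_ebil, ebil_smul_left, ebil_smul_right]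
  ring

lemma extz_not_mem {S : Finset (Fin d → ℤ)} (φ : S → ℝ) {z} (hz : z ∉ S) :
    extz S φ z = 0 := dif_neg hz

lemma extz_mem {S : Finset (Fin d → ℤ)} (φ : S → ℝ) {z} (hz : z ∈ S) :
    extz S φ z = φ ⟨z, hz⟩ := dif_pos hz

lemma extz_add (S : Finset (Fin d → ℤ)) (φ ψ : S → ℝ) :
    extz S (φ + ψ) = extz S φ + extz S ψ := by
  funext z; by_cases h : z ∈ S <;> simp [extz, h]

lemma extz_sub (S : Finset (Fin d → ℤ)) (φ ψ : S → ℝ) :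
    extz S (φ - ψ) = extz S φ - extz S ψ := by
  funext z; by_cases h : z ∈ S <;> simp [extz, h]

lemma extz_smul (S : Finset (Fin d → ℤ)) (t : ℝ) (φ : S → ℝ) :
    extz S (t • φ) = t • extz S φ := by
  funext z; by_cases h : z ∈ S <;> simp [extz, h]

lemma extz_eq_zero_of_ham (hd : 0 < d) {B : Finset (Fin d → ℤ)} {φ : B → ℝ}
    (h : ham d B (extz B φ) = 0) : φ = 0 := by
  classical
  set f := extz B φ with hf
  have hc : (0:ℝ) < 1 / (8 * d) := by
    have : (0:ℝ) < (d:ℝ) := by exact_mod_cast hd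
    positivity
  rw [ham_eq_ebil] at h
  have hsum : ebil d B f f = 0 := by
    rcases mul_eq_zero.mp h with h' | h'
    · exact absurd h' (ne_of_gt hc)
    · exact h'
  have key : ∀ x ∈ B ∪ bdry d B, ∀ y ∈ B ∪ bdry d B, y ∈ nbrs d x → f x = f y := by
    intro x hx y hy hnb
    unfold ebil at hsum
    have h1 := (Finset.sum_eq_zero_iff_of_nonneg (fun x _ =>
      Finset.sum_nonneg fun y _ => by split_ifs; exacts [mul_self_nonneg _, le_refl 0])).mp
      hsum x hx
    have h2 := (Finset.sum_eq_zero_iff_of_nonneg (fun y _ => by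
      split_ifs; exacts [mul_self_nonneg _, le_refl 0])).mp h1 y hy
    rw [if_pos hnb] at h2
    have h3 := mul_self_eq_zero.mp h2
    linarith [sub_eq_zero.mp h3]
  set i0 : Fin d := ⟨0, hd⟩
  obtain ⟨M, hM⟩ : ∃ M : ℤ, ∀ z ∈ B, z i0 ≤ M := by
    refine ⟨(insert 0 (B.image fun z => z i0)).max' (Finset.insert_nonempty _ _), fun z hz => ?_⟩
    exact Finset.le_max' _ (z i0)
      (Finset.mem_insert_of_mem (Finset.mem_image.mpr ⟨z, hz, rfl⟩))
  have step : ∀ n : ℕ, ∀ z, z ∈ B → M - z i0 ≤ (n : ℤ) → f z = 0 := by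
    intro n
    induction n with
    | zero =>
      intro z hz hle
      set z' := Function.update z i0 (z i0 + 1) with hz'
      have hz'nb : z' ∈ nbrs d z := mem_nbrs_iff.mpr ⟨i0, true, by simp [hz']⟩
      have hz'i0 : z' i0 = z i0 + 1 := Function.update_self _ _ _
      have hz'B : z' ∉ B := by
        intro hmem
        have := hM z' hmem
        omega
      have heq := key z (Finset.mem_union_left _ hz) z' (nbr_mem_union_bdry hz hz'nb) hz'nb
      rw [heq, hf, extz_not_mem _ hz'B]
    | succ n ih =>
      intro z hz hle
      set z' := Function.update z i0 (z i0 + 1) with hz'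
      have hz'nb : z' ∈ nbrs d z := mem_nbrs_iff.mpr ⟨i0, true, by simp [hz']⟩
      have hz'i0 : z' i0 = z i0 + 1 := Function.update_self _ _ _
      have heq := key z (Finset.mem_union_left _ hz) z' (nbr_mem_union_bdry hz hz'nb) hz'nb
      by_cases hz'B : z' ∈ B
      · rw [heq]
        exact ih z' hz'B (by omega)
      · rw [heq, hf, extz_not_mem _ hz'B]
  funext i
  have hstep := step (M - (i : Fin d → ℤ) i0).toNat i i.2 (Int.self_le_toNat _)
  rw [hf, extz_mem _ i.2] at hstep
  simpa using hstep


open MeasureTheory Real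

lemma continuous_ham_comp {X : Type*} [TopologicalSpace X] (S : Finset (Fin d → ℤ))
    (G : X → (Fin d → ℤ) → ℝ) (hG : ∀ z, Continuous fun x => G x z) :
    Continuous fun x => ham d S (G x) := by
  unfold ham
  refine continuous_const.mul ?_
  refine continuous_finset_sum _ fun p _ => continuous_finset_sum _ fun q _ => ?_
  by_cases h : q ∈ nbrs d p
  · simp only [if_pos h]
    exact ((hG p).sub (hG q)).pow 2
  · simp only [if_neg h]
    exact continuous_const

lemma continuous_extz (S : Finset (Fin d → ℤ)) (z : Fin d → ℤ) :
    Continuous fun ψ : S → ℝ => extz S ψ z := by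
  unfold extz
  by_cases h : z ∈ S
  · simp only [dif_pos h]; exact continuous_apply _
  · simp only [dif_neg h]; exact continuous_const

lemma continuous_gffDensity (S : Finset (Fin d → ℤ)) : Continuous (gffDensity d S) := by
  unfold gffDensity
  exact Real.continuous_exp.comp (continuous_ham_comp S _ (continuous_extz S)).neg

lemma quad_lower_bound {V : Type*} [NormedAddCommGroup V] [NormedSpace ℝ V]
    [FiniteDimensional ℝ V]
    (Q : V → ℝ) (hc : Continuous Q) (hh : ∀ (t : ℝ) (x : V), Q (t • x) = t ^ 2 * Q x)
    (hpos : ∀ x : V, x ≠ 0 → 0 < Q x) : ∃ ε : ℝ, 0 < ε ∧ ∀ x : V, ε * ‖x‖ ^ 2 ≤ Q x := by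
  have hQ0 : Q 0 = 0 := by
    have := hh 0 0
    simpa using this
  by_cases hV : ∀ x : V, x = 0
  · exact ⟨1, one_pos, fun x => by rw [hV x]; simp [hQ0]⟩
  push_neg at hV
  obtain ⟨x₀, hx₀⟩ := hV
  have hsne : (Metric.sphere (0:V) 1).Nonempty := by
    refine ⟨‖x₀‖⁻¹ • x₀, ?_⟩
    simp [norm_smul, abs_of_nonneg (inv_nonneg.mpr (norm_nonneg x₀)),
      inv_mul_cancel₀ (norm_ne_zero_iff.mpr hx₀)]
  obtain ⟨u, hu_mem, hu_min⟩ :=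
    (isCompact_sphere (0:V) 1).exists_isMinOn hsne hc.continuousOn
  have hu_norm : ‖u‖ = 1 := by simpa using hu_mem
  have hu_ne : u ≠ 0 := by
    intro h; rw [h] at hu_norm; simp at hu_norm
  refine ⟨Q u, hpos u hu_ne, fun x => ?_⟩
  by_cases hx : x = 0
  · rw [hx]; simp [hQ0]
  · have hnx : ‖x‖ ≠ 0 := norm_ne_zero_iff.mpr hx
    have hmem : ‖x‖⁻¹ • x ∈ Metric.sphere (0:V) 1 := by
      simp [norm_smul, abs_of_nonneg (inv_nonneg.mpr (norm_nonneg x)), inv_mul_cancel₀ hnx]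
    have hmin := isMinOn_iff.mp hu_min _ hmem
    rw [hh] at hmin
    have hx2 : (0:ℝ) < ‖x‖ ^ 2 := by positivity
    have hinv : (‖x‖⁻¹) ^ 2 * ‖x‖ ^ 2 = 1 := by field_simp
    have h4 := mul_le_mul_of_nonneg_right hmin (le_of_lt hx2)
    have h5 : (‖x‖⁻¹ ^ 2 * Q x) * ‖x‖ ^ 2 = Q x := by
      rw [mul_comm (‖x‖⁻¹ ^ 2) (Q x), mul_assoc, hinv, mul_one]
    linarith

lemma integrable_gffDensity (hd : 0 < d) (S : Finset (Fin d → ℤ)) :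
    Integrable (gffDensity d S) := by
  obtain ⟨ε, hε, hQ⟩ := quad_lower_bound (V := (S → ℝ)) (fun ψ => ham d S (extz S ψ))
    (continuous_ham_comp S _ (continuous_extz S))
    (fun t ψ => by
      show ham d S (extz S (t • ψ)) = t ^ 2 * ham d S (extz S ψ)
      rw [extz_smul, ham_smul])
    (fun ψ hψ => lt_of_le_of_ne (ham_nonneg _ _)
      (fun h => hψ (extz_eq_zero_of_ham hd h.symm)))
  set n := Fintype.card S with hn
  refine Integrable.mono'
    (g := fun ψ : S → ℝ => ∏ i : S, Real.exp (-(ε / n) * (ψ i) ^ 2)) ?_ ?_ ?_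
  · refine Integrable.fintype_prod
      (f := fun (_ : {x // x ∈ S}) (v : ℝ) => Real.exp (-(ε / n) * v ^ 2)) fun i => ?_
    have hnpos : 0 < n := Fintype.card_pos_iff.mpr ⟨i⟩
    have : (0:ℝ) < ε / n := by positivity
    exact integrable_exp_neg_mul_sq this
  · exact (continuous_gffDensity S).aestronglyMeasurable
  · refine Filter.Eventually.of_forall fun ψ => ?_
    unfold gffDensity
    beta_reduce
    rw [Real.norm_eq_abs, abs_of_pos (Real.exp_pos _), ← Real.exp_sum]
    apply Real.exp_le_exp.mpr
    by_cases hn0 : n = 0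
    · have hempty : IsEmpty (S : Type _) := Fintype.card_eq_zero_iff.mp hn0
      rw [Finset.univ_eq_empty, Finset.sum_empty]
      linarith [ham_nonneg (d := d) S (extz S ψ)]
    · have hnpos : (0:ℝ) < n := by
        exact_mod_cast Nat.pos_of_ne_zero hn0
      have hsum : ∑ i : S, (ψ i) ^ 2 ≤ (n : ℝ) * ‖ψ‖ ^ 2 := by
        have hb : ∀ i : S, (ψ i) ^ 2 ≤ ‖ψ‖ ^ 2 := by
          intro i
          have h1 : ‖ψ i‖ ≤ ‖ψ‖ := norm_le_pi_norm ψ i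
          calc (ψ i) ^ 2 = ‖ψ i‖ ^ 2 := by rw [Real.norm_eq_abs, sq_abs]
            _ ≤ ‖ψ‖ ^ 2 := by
                exact pow_le_pow_left₀ (norm_nonneg _) h1 2
        calc ∑ i : S, (ψ i) ^ 2 ≤ ∑ _i : S, ‖ψ‖ ^ 2 :=
              Finset.sum_le_sum fun i _ => hb i
          _ = (n : ℝ) * ‖ψ‖ ^ 2 := by
              rw [Finset.sum_const, nsmul_eq_mul, Finset.card_univ]
      have h3 := hQ ψ
      rw [← Finset.mul_sum]
      have h2 : (ε / n) * ∑ i : S, (ψ i) ^ 2 ≤ ε * ‖ψ‖ ^ 2 := by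
        calc (ε / n) * ∑ i : S, (ψ i) ^ 2 ≤ (ε / n) * ((n:ℝ) * ‖ψ‖ ^ 2) :=
              mul_le_mul_of_nonneg_left hsum (by positivity)
          _ = ε * ‖ψ‖ ^ 2 := by field_simp
      linarith

lemma gffDensity_pos (S : Finset (Fin d → ℤ)) (ψ : S → ℝ) : 0 < gffDensity d S ψ := by
  unfold gffDensity; exact Real.exp_pos _

lemma gffZ_pos (hd : 0 < d) (S : Finset (Fin d → ℤ)) : 0 < gffZ d S := by
  have h := integral_pos_iff_support_of_nonneg_ae (μ := (volume : Measure (S → ℝ)))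
    (Filter.Eventually.of_forall fun ψ => (gffDensity_pos S ψ).le)
    (integrable_gffDensity hd S)
  rw [gffZ, h]
  have hsupp : Function.support (gffDensity d S) = Set.univ :=
    Set.eq_univ_of_forall fun ψ => (gffDensity_pos S ψ).ne'
  rw [hsupp]
  rw [MeasureTheory.volume_pi, MeasureTheory.Measure.pi_univ]
  refine CanonicallyOrderedAdd.prod_pos.mpr fun i _ => ?_
  simp [Real.volume_univ]

lemma lintegral_gffDensity (hd : 0 < d) (S : Finset (Fin d → ℤ)) :
    ∫⁻ ψ, ENNReal.ofReal (gffDensity d S ψ) = ENNReal.ofReal (gffZ d S) :=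
  (MeasureTheory.ofReal_integral_eq_lintegral_ofReal (integrable_gffDensity hd S)
    (Filter.Eventually.of_forall fun ψ => (gffDensity_pos S ψ).le)).symm


lemma ebil_expand (S : Finset (Fin d → ℤ)) (f g : (Fin d → ℤ) → ℝ) :
    ebil d S (f + g) (f + g)
      = ebil d S f f + ebil d S f g + (ebil d S g f + ebil d S g g) := by
  rw [ebil_add_left, ebil_add_right, ebil_add_right]

set_option maxHeartbeats 1000000 in
lemma exists_h (hd : 0 < d) (Λ A : Finset (Fin d → ℤ)) (χ : A → ℝ) (hχ : ∀ i, 0 ≤ χ i) :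
    ∃ h : (↥(Λ \ A)) → ℝ, (∀ i, 0 ≤ h i) ∧ ∀ φ : (↥(Λ \ A)) → ℝ,
      ham d Λ (extz (Λ \ A) φ + extz A χ) =
        ham d (Λ \ A) (extz (Λ \ A) (φ - h)) + ham d Λ (extz (Λ \ A) h + extz A χ) := by
  classical
  set B := Λ \ A with hBdef
  set v : (Fin d → ℤ) → ℝ := extz A χ with hv
  have hBΛ : B ⊆ Λ := Finset.sdiff_subset
  have hsupp : ∀ (φ : B → ℝ) z, z ∉ B → extz B φ z = 0 := fun φ z hz => extz_not_mem _ hz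
  set bil : LinearMap.BilinForm ℝ (B → ℝ) :=
    LinearMap.mk₂ ℝ (fun φ ψ => ebil d Λ (extz B φ) (extz B ψ))
      (fun φ φ' ψ => by
        show ebil d Λ (extz B (φ + φ')) (extz B ψ)
          = ebil d Λ (extz B φ) (extz B ψ) + ebil d Λ (extz B φ') (extz B ψ)
        rw [extz_add, ebil_add_left])
      (fun t φ ψ => by
        show ebil d Λ (extz B (t • φ)) (extz B ψ)
          = t • ebil d Λ (extz B φ) (extz B ψ)
        rw [extz_smul, ebil_smul_left, smul_eq_mul])
      (fun φ ψ ψ' => by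
        show ebil d Λ (extz B φ) (extz B (ψ + ψ'))
          = ebil d Λ (extz B φ) (extz B ψ) + ebil d Λ (extz B φ) (extz B ψ')
        rw [extz_add, ebil_add_right])
      (fun t φ ψ => by
        show ebil d Λ (extz B φ) (extz B (t • ψ))
          = t • ebil d Λ (extz B φ) (extz B ψ)
        rw [extz_smul, ebil_smul_right, smul_eq_mul]) with hbil
  have hbil_apply : ∀ φ ψ : B → ℝ, bil φ ψ = ebil d Λ (extz B φ) (extz B ψ) := fun φ ψ => rfl
  have hbil_symm : ∀ φ ψ : B → ℝ, bil φ ψ = bil ψ φ := fun φ ψ => ebil_symm _ _ _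
  have hbil_ham : ∀ φ : B → ℝ, (1 / (8 * (d:ℝ))) * bil φ φ = ham d B (extz B φ) := by
    intro φ
    rw [hbil_apply, ebil_restrict hBΛ (hsupp φ) (hsupp φ), ← ham_eq_ebil]
  have hself : ∀ φ : B → ℝ, bil φ φ = 0 → φ = 0 := by
    intro φ h0
    exact extz_eq_zero_of_ham hd (B := B) (by rw [← hbil_ham, h0, mul_zero])
  have hnd : bil.Nondegenerate := ⟨fun φ hφ => hself φ (hφ φ), fun φ hφ => hself φ (hφ φ)⟩
  set ℓ : (↥B → ℝ) →ₗ[ℝ] ℝ :=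
    { toFun := fun w => ebil d Λ (extz B w) v
      map_add' := fun w w' => by
        show ebil d Λ (extz B (w + w')) v
          = ebil d Λ (extz B w) v + ebil d Λ (extz B w') v
        rw [extz_add, ebil_add_left]
      map_smul' := fun t w => by
        simp only [RingHom.id_apply, smul_eq_mul]
        show ebil d Λ (extz B (t • w)) v = t * ebil d Λ (extz B w) v
        rw [extz_smul, ebil_smul_left] } with hℓ
  have hℓ_apply : ∀ w : B → ℝ, ℓ w = ebil d Λ (extz B w) v := fun w => rfl
  set h₁ : B → ℝ := (bil.toDual hnd).symm (-ℓ) with hh₁def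
  have hfoc : ∀ w : B → ℝ, bil h₁ w = -(ℓ w) := by
    intro w
    have h0 := LinearMap.BilinForm.apply_toDual_symm_apply (B := bil) (hB := hnd) (f := -ℓ) w
    rw [hh₁def]
    simpa using h0
  have claim : ∀ φ : B → ℝ, ham d Λ (extz B φ + v) =
      ham d B (extz B (φ - h₁)) + ham d Λ (extz B h₁ + v) := by
    intro φ
    set s : (Fin d → ℤ) → ℝ := extz B (φ - h₁) with hs
    set t : (Fin d → ℤ) → ℝ := extz B h₁ + v with ht
    have hdecomp : extz B φ + v = s + t := by
      rw [hs, extz_sub, ht]; abel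
    have hcross : ebil d Λ s t = 0 := by
      rw [ht, ebil_add_right]
      have e1 : ebil d Λ s (extz B h₁) = bil (φ - h₁) h₁ := rfl
      have e2 : ebil d Λ s v = ℓ (φ - h₁) := rfl
      rw [e1, e2, hbil_symm, hfoc]
      ring
    rw [hdecomp, ham_eq_ebil, ebil_expand, hcross]
    have hhams : ham d Λ s = ham d B s := ham_restrict hBΛ (hsupp _)
    rw [ebil_symm Λ t s, hcross, ← hhams, ham_eq_ebil Λ s, ham_eq_ebil Λ t]
    ring
  set h₂ : (↥B) → ℝ := fun i => max (h₁ i) 0 with hh₂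
  have hmaxfield : extz B h₂ + v = fun z => max ((extz B h₁ + v) z) 0 := by
    funext z
    by_cases hzB : z ∈ B
    · have hzA : z ∉ A := (Finset.mem_sdiff.mp hzB).2
      simp only [Pi.add_apply, extz_mem _ hzB, hv, extz_not_mem χ hzA, add_zero, hh₂]
    · by_cases hzA : z ∈ A
      · simp only [Pi.add_apply, extz_not_mem _ hzB, hv, extz_mem χ hzA, zero_add]
        exact (max_eq_left (hχ _)).symm
      · simp only [Pi.add_apply, extz_not_mem _ hzB, hv, extz_not_mem χ hzA, add_zero]
        simp
  have hle : ham d Λ (extz B h₂ + v) ≤ ham d Λ (extz B h₁ + v) := by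
    rw [hmaxfield]
    rw [ham_eq_ebil, ham_eq_ebil]
    have hcnn : (0:ℝ) ≤ 1 / (8 * d) := by positivity
    refine mul_le_mul_of_nonneg_left ?_ hcnn
    unfold ebil
    refine Finset.sum_le_sum fun x _ => Finset.sum_le_sum fun y _ => ?_
    split_ifs with hnb
    · set g : (Fin d → ℤ) → ℝ := extz B h₁ + v with hg
      have habs := abs_max_sub_max_le_abs (g x) (g y) 0
      calc (max (g x) 0 - max (g y) 0) * (max (g x) 0 - max (g y) 0)
          = |max (g x) 0 - max (g y) 0| ^ 2 := by rw [sq_abs]; ring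
        _ ≤ |g x - g y| ^ 2 := by
            exact pow_le_pow_left₀ (abs_nonneg _) habs 2
        _ = (g x - g y) * (g x - g y) := by rw [sq_abs]; ring
    · exact le_refl 0
  have hmin0 : ham d B (extz B (h₂ - h₁)) = 0 := by
    have h1 := claim h₂
    have h2 := ham_nonneg (d := d) B (extz B (h₂ - h₁))
    linarith
  have hh12 : h₂ = h₁ := by
    have h3 := extz_eq_zero_of_ham hd hmin0
    have h4 : h₂ - h₁ = 0 := h3
    exact sub_eq_zero.mp h4
  refine ⟨h₁, fun i => ?_, claim⟩
  have h5 : h₂ i = h₁ i := congrFun hh12 i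
  rw [← h5]
  exact le_max_right _ _
end Aux

/-- Conditionally on `φ ∈ [0,a]` on `A`, the GFF on `Λ_N` stays nonnegative off `A`
with probability at least that of the hard-wall event for the zero-boundary GFF on
`Λ_N \ A`. -/
theorem gff_wall_conditional_lower_bound (d N : ℕ) (hd : 3 ≤ d)
    (A : Finset (Fin d → ℤ)) (hA : A ⊆ box d N) (a : ℝ) (ha : 0 < a) :
    gff d (box d N)
          ({ψ | ∀ x : box d N, (x : Fin d → ℤ) ∉ A → 0 ≤ ψ x} ∩
            {ψ | ∀ x : box d N, (x : Fin d → ℤ) ∈ A → ψ x ∈ Set.Icc 0 a}) /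
        gff d (box d N) {ψ | ∀ x : box d N, (x : Fin d → ℤ) ∈ A → ψ x ∈ Set.Icc 0 a} ≥
      gff d (box d N \ A) (wall (box d N \ A)) := by
  classical
  have hd0 : 0 < d := by omega
  set Λ : Finset (Fin d → ℤ) := box d N with hΛ
  set B : Finset (Fin d → ℤ) := Λ \ A with hB
  set T : Set (↥Λ → ℝ) := {ψ | ∀ x : ↥Λ, (x : Fin d → ℤ) ∈ A → ψ x ∈ Set.Icc 0 a} with hT
  set S : Set (↥Λ → ℝ) := {ψ | ∀ x : ↥Λ, (x : Fin d → ℤ) ∉ A → 0 ≤ ψ x} with hS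
  set D : (↥Λ → ℝ) → ENNReal := fun ψ => ENNReal.ofReal (gffDensity d Λ ψ) with hD
  set DB : (↥B → ℝ) → ENNReal := fun φ => ENNReal.ofReal (gffDensity d B φ) with hDB
  set cube : Set (↥A → ℝ) := {χ | ∀ y : ↥A, χ y ∈ Set.Icc 0 a} with hcube
  have hDmeas : Measurable D := (continuous_gffDensity Λ).measurable.ennreal_ofReal
  have hDBmeas : Measurable DB := (continuous_gffDensity B).measurable.ennreal_ofReal
  -- measurability of the events
  have hTmeas : MeasurableSet T := by
    have hTeq : T = ⋂ x : ↥Λ, {ψ : ↥Λ → ℝ | (x : Fin d → ℤ) ∈ A → ψ x ∈ Set.Icc 0 a} := by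
      ext ψ; simp only [Set.mem_iInter, Set.mem_setOf_eq]; rfl
    rw [hTeq]
    refine MeasurableSet.iInter fun x => ?_
    by_cases hx : (x : Fin d → ℤ) ∈ A
    · simp only [hx, true_implies]
      have hme : Measurable fun ψ : ↥Λ → ℝ => ψ x := measurable_pi_apply x
      exact hme measurableSet_Icc
    · simp only [hx, false_implies, Set.setOf_true]
      exact MeasurableSet.univ
  have hSmeas : MeasurableSet S := by
    have hSeq : S = ⋂ x : ↥Λ, {ψ : ↥Λ → ℝ | (x : Fin d → ℤ) ∉ A → 0 ≤ ψ x} := by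
      ext ψ; simp only [Set.mem_iInter, Set.mem_setOf_eq]; rfl
    rw [hSeq]
    refine MeasurableSet.iInter fun x => ?_
    by_cases hx : (x : Fin d → ℤ) ∉ A
    · simp only [hx, not_false_eq_true, true_implies]
      have hme : Measurable fun ψ : ↥Λ → ℝ => ψ x := measurable_pi_apply x
      exact hme measurableSet_Ici
    · simp only [hx, false_implies, Set.setOf_true]
      exact MeasurableSet.univ
  have hwallmeas : MeasurableSet (wall B) := by
    have hweq : wall B = ⋂ z : ↥B, {φ : ↥B → ℝ | 0 ≤ φ z} := by
      ext φ; simp only [Set.mem_iInter, Set.mem_setOf_eq]; rfl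
    rw [hweq]
    refine MeasurableSet.iInter fun z => ?_
    have hme : Measurable fun φ : ↥B → ℝ => φ z := measurable_pi_apply z
    exact hme measurableSet_Ici
  -- partition functions
  set ZΛ : ENNReal := ENNReal.ofReal (gffZ d Λ) with hZΛ
  set J : ENNReal := ENNReal.ofReal (gffZ d B) with hJ
  have hZΛ0 : ZΛ ≠ 0 := (ENNReal.ofReal_pos.mpr (gffZ_pos hd0 Λ)).ne'
  have hZΛtop : ZΛ ≠ ⊤ := ENNReal.ofReal_ne_top
  have hJ0 : J ≠ 0 := (ENNReal.ofReal_pos.mpr (gffZ_pos hd0 B)).ne'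
  have hJtop : J ≠ ⊤ := ENNReal.ofReal_ne_top
  set Jp : ENNReal := ∫⁻ φ in wall B, DB φ with hJp
  have hJp_le : Jp ≤ J := by
    rw [hJ, ← lintegral_gffDensity hd0 B]
    exact MeasureTheory.setLIntegral_le_lintegral _ _
  have hJptop : Jp ≠ ⊤ := (lt_of_le_of_lt hJp_le (ENNReal.ofReal_lt_top)).ne
  -- value of the RHS measure
  have hpw : gff d B (wall B) = J⁻¹ * Jp := by
    rw [gff, Measure.smul_apply, MeasureTheory.withDensity_apply _ hwallmeas, smul_eq_mul]
  have hpwtop : gff d B (wall B) ≠ ⊤ := by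
    rw [hpw]
    exact ENNReal.mul_ne_top (ENNReal.inv_ne_top.mpr hJ0) hJptop
  -- the measurable equivalence
  set p : ↥Λ → Prop := fun x => (x : Fin d → ℤ) ∈ A with hp
  have hmem : ∀ (x : ↥Λ), ¬ p x → (x : Fin d → ℤ) ∈ B :=
    fun x hx => Finset.mem_sdiff.mpr ⟨x.2, hx⟩
  set eA : ↥A ≃ {x : ↥Λ // p x} :=
    { toFun := fun y => ⟨⟨(y : Fin d → ℤ), hA y.2⟩, y.2⟩
      invFun := fun x => ⟨((x : ↥Λ) : Fin d → ℤ), x.2⟩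
      left_inv := fun y => rfl
      right_inv := fun x => rfl } with heA
  set eB : ↥B ≃ {x : ↥Λ // ¬ p x} :=
    { toFun := fun z => ⟨⟨(z : Fin d → ℤ), Finset.mem_sdiff.mp z.2 |>.1⟩,
        (Finset.mem_sdiff.mp z.2).2⟩
      invFun := fun x => ⟨((x : ↥Λ) : Fin d → ℤ), hmem _ x.2⟩
      left_inv := fun z => rfl
      right_inv := fun x => rfl } with heB
  set e : (↥Λ → ℝ) ≃ᵐ (↥A → ℝ) × (↥B → ℝ) :=
    (MeasurableEquiv.piEquivPiSubtypeProd (fun _ : ↥Λ => ℝ) p).trans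
      ((MeasurableEquiv.piCongrLeft (fun _ => ℝ) eA).prodCongr
       (MeasurableEquiv.piCongrLeft (fun _ => ℝ) eB)).symm with he
  have mp : MeasurePreserving e volume volume := by
    have mp1 := MeasureTheory.volume_preserving_piEquivPiSubtypeProd
      (fun _ : ↥Λ => ℝ) p
    have mpA := MeasureTheory.volume_measurePreserving_piCongrLeft
      (fun _ : {x : ↥Λ // p x} => ℝ) eA
    have mpB := MeasureTheory.volume_measurePreserving_piCongrLeft
      (fun _ : {x : ↥Λ // ¬ p x} => ℝ) eB
    have mp2 : MeasurePreserving
        ((MeasurableEquiv.piCongrLeft (fun _ => ℝ) eA).prodCongr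
          (MeasurableEquiv.piCongrLeft (fun _ => ℝ) eB)) volume volume := mpA.prod mpB
    exact (MeasurePreserving.symm _ mp2).comp mp1
  -- pointwise description of e.symm
  have he_val : ∀ (χ : ↥A → ℝ) (φ : ↥B → ℝ) (x : ↥Λ),
      e.symm (χ, φ) x = if h : (x : Fin d → ℤ) ∈ A then χ ⟨x, h⟩
        else φ ⟨(x : Fin d → ℤ), hmem x h⟩ := by
    intro χ φ x
    show (Equiv.piEquivPiSubtypeProd p (fun _ : ↥Λ => ℝ)).symm
      ((Equiv.piCongrLeft (fun _ => ℝ) eA) χ, (Equiv.piCongrLeft (fun _ => ℝ) eB) φ) x = _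
    rw [Equiv.piEquivPiSubtypeProd_symm_apply]
    by_cases h : p x
    · rw [dif_pos h, dif_pos h]
      exact Equiv.piCongrLeft_apply_apply (P := fun _ => ℝ) eA χ ⟨(x : Fin d → ℤ), h⟩
    · rw [dif_neg h, dif_neg h]
      exact Equiv.piCongrLeft_apply_apply (P := fun _ => ℝ) eB φ ⟨(x : Fin d → ℤ), hmem x h⟩
  -- the glued field
  have hext : ∀ (χ : ↥A → ℝ) (φ : ↥B → ℝ),
      extz Λ (e.symm (χ, φ)) = extz B φ + extz A χ := by
    intro χ φ
    funext z
    by_cases hzΛ : z ∈ Λ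
    · rw [extz_mem _ hzΛ, he_val]
      by_cases hzA : z ∈ A
      · have hzB : z ∉ B := fun hzB => (Finset.mem_sdiff.mp hzB).2 hzA
        rw [dif_pos hzA, Pi.add_apply, extz_not_mem _ hzB, extz_mem _ hzA, zero_add]
      · have hzB : z ∈ B := Finset.mem_sdiff.mpr ⟨hzΛ, hzA⟩
        rw [dif_neg hzA, Pi.add_apply, extz_mem _ hzB, extz_not_mem _ hzA, add_zero]
    · have hzB : z ∉ B := fun hzB => hzΛ (Finset.mem_sdiff.mp hzB).1
      have hzA : z ∉ A := fun hzA => hzΛ (hA hzA)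
      rw [extz_not_mem _ hzΛ, Pi.add_apply, extz_not_mem _ hzB, extz_not_mem _ hzA, add_zero]
  set Dfull : (↥A → ℝ) → (↥B → ℝ) → ENNReal :=
    fun χ φ => ENNReal.ofReal (Real.exp (-(ham d Λ (extz B φ + extz A χ)))) with hDfull
  have hDcomp : ∀ χ φ, D (e.symm (χ, φ)) = Dfull χ φ := by
    intro χ φ
    rw [hD, hDfull]
    beta_reduce
    unfold gffDensity
    rw [hext]
  -- membership translations
  have hTmem : ∀ χ φ, (e.symm (χ, φ) ∈ T) ↔ χ ∈ cube := by
    intro χ φ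
    constructor
    · intro hmemT y
      have h1 := hmemT ⟨(y : Fin d → ℤ), hA y.2⟩ y.2
      rw [he_val] at h1
      rw [dif_pos y.2] at h1
      exact h1
    · intro hc x hx
      rw [he_val, dif_pos hx]
      exact hc _
  have hSmem : ∀ χ φ, (e.symm (χ, φ) ∈ S) ↔ φ ∈ wall B := by
    intro χ φ
    constructor
    · intro hmemS z
      have hzΛ : (z : Fin d → ℤ) ∈ Λ := (Finset.mem_sdiff.mp z.2).1
      have hzA : (z : Fin d → ℤ) ∉ A := (Finset.mem_sdiff.mp z.2).2
      have h1 := hmemS ⟨(z : Fin d → ℤ), hzΛ⟩ hzA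
      rw [he_val, dif_neg hzA] at h1
      exact h1
    · intro hw x hx
      rw [he_val, dif_neg hx]
      exact hw _
  -- Fubini
  have fub : ∀ (E : Set (↥Λ → ℝ)), MeasurableSet E →
      ∫⁻ ψ in E, D ψ = ∫⁻ χ, ∫⁻ φ, Set.indicator E D (e.symm (χ, φ)) := by
    intro E hE
    rw [← MeasureTheory.lintegral_indicator hE]
    rw [← (MeasurePreserving.symm _ mp).lintegral_comp (hDmeas.indicator hE)]
    have hmeas2 : AEMeasurable (fun q : (↥A → ℝ) × (↥B → ℝ) => Set.indicator E D (e.symm q))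
        ((volume : Measure (↥A → ℝ)).prod (volume : Measure (↥B → ℝ))) :=
      ((hDmeas.indicator hE).comp e.symm.measurable).aemeasurable
    rw [MeasureTheory.Measure.volume_eq_prod]
    exact MeasureTheory.lintegral_prod _ hmeas2
  have hindT : ∀ χ φ, Set.indicator T D (e.symm (χ, φ))
      = if χ ∈ cube then Dfull χ φ else 0 := by
    intro χ φ
    rw [Set.indicator_apply]
    by_cases hc : χ ∈ cube
    · rw [if_pos ((hTmem χ φ).mpr hc), if_pos hc, hDcomp]
    · rw [if_neg (fun hm => hc ((hTmem χ φ).mp hm)), if_neg hc]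
  have hindST : ∀ χ φ, Set.indicator (S ∩ T) D (e.symm (χ, φ))
      = if χ ∈ cube then (if φ ∈ wall B then Dfull χ φ else 0) else 0 := by
    intro χ φ
    rw [Set.indicator_apply]
    by_cases hc : χ ∈ cube
    · by_cases hw : φ ∈ wall B
      · rw [if_pos ⟨(hSmem χ φ).mpr hw, (hTmem χ φ).mpr hc⟩, if_pos hc, if_pos hw, hDcomp]
      · rw [if_neg (fun hm => hw ((hSmem χ φ).mp hm.1)), if_pos hc, if_neg hw]
    · rw [if_neg (fun hm => hc ((hTmem χ φ).mp hm.2)), if_neg hc]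
  -- the core inequality
  have core : ∀ χ : ↥A → ℝ, (∀ y, 0 ≤ χ y) →
      gff d B (wall B) * ∫⁻ φ, Dfull χ φ
        ≤ ∫⁻ φ, (if φ ∈ wall B then Dfull χ φ else 0) := by
    intro χ hχ
    obtain ⟨h, hposh, hid⟩ := exists_h hd0 Λ A χ hχ
    set c : ℝ := ham d Λ (extz B h + extz A χ) with hc
    set k : ENNReal := ENNReal.ofReal (Real.exp (-c)) with hk
    have hktop : k ≠ ⊤ := ENNReal.ofReal_ne_top
    have hDfull_eq : ∀ φ, Dfull χ φ = k * DB (φ - h) := by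
      intro φ
      rw [hDfull]
      beta_reduce
      have h1 : ham d Λ (extz B φ + extz A χ)
          = ham d B (extz B (φ - h)) + c := hid φ
      have h2 : Real.exp (-(ham d B (extz B (φ - h)) + c))
          = Real.exp (-c) * gffDensity d B (φ - h) := by
        unfold gffDensity
        rw [← Real.exp_add]
        ring_nf
      rw [h1, h2, ENNReal.ofReal_mul (Real.exp_pos _).le]
    have htrans : ∀ f : (↥B → ℝ) → ENNReal,
        ∫⁻ φ, f (φ - h) = ∫⁻ φ, f φ := by
      intro f
      simp_rw [sub_eq_add_neg]
      exact MeasureTheory.lintegral_add_right_eq_self f (-h)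
    have htotal : ∫⁻ φ, Dfull χ φ = k * J := by
      simp_rw [hDfull_eq]
      rw [MeasureTheory.lintegral_const_mul' k _ hktop, htrans DB, hDB,
        lintegral_gffDensity hd0 B]
    have hwallside : ∫⁻ φ, (if φ ∈ wall B then Dfull χ φ else 0)
        = k * ∫⁻ φ, (if φ + h ∈ wall B then DB φ else 0) := by
      have e1 : ∀ φ, (if φ ∈ wall B then Dfull χ φ else 0)
          = k * (if φ ∈ wall B then DB (φ - h) else 0) := by
        intro φ
        by_cases hw : φ ∈ wall B
        · rw [if_pos hw, if_pos hw, hDfull_eq]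
        · rw [if_neg hw, if_neg hw, mul_zero]
      simp_rw [e1]
      rw [MeasureTheory.lintegral_const_mul' k _ hktop]
      congr 1
      have e2 : ∀ φ, (if φ ∈ wall B then DB (φ - h) else 0)
          = (fun ψ => if ψ + h ∈ wall B then DB ψ else 0) (φ - h) := by
        intro φ
        simp only [sub_add_cancel]
      simp_rw [e2]
      exact htrans (fun ψ => if ψ + h ∈ wall B then DB ψ else 0)
    have hstep : Jp ≤ ∫⁻ φ, (if φ + h ∈ wall B then DB φ else 0) := by
      have hJp_eq : Jp = ∫⁻ φ, (if φ ∈ wall B then DB φ else 0) := by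
        rw [hJp, ← MeasureTheory.lintegral_indicator hwallmeas]
        congr 1
      rw [hJp_eq]
      refine MeasureTheory.lintegral_mono fun φ => ?_
      by_cases hw : φ ∈ wall B
      · have hw' : φ + h ∈ wall B := fun z => add_nonneg (hw z) (hposh z)
        rw [if_pos hw, if_pos hw']
      · rw [if_neg hw]
        exact zero_le
    calc gff d B (wall B) * ∫⁻ φ, Dfull χ φ = (J⁻¹ * Jp) * (k * J) := by
          rw [hpw, htotal]
      _ = (k * Jp) * (J⁻¹ * J) := by ring
      _ = k * Jp := by rw [ENNReal.inv_mul_cancel hJ0 hJtop, mul_one]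
      _ ≤ k * ∫⁻ φ, (if φ + h ∈ wall B then DB φ else 0) :=
          mul_le_mul_right hstep k
      _ = ∫⁻ φ, (if φ ∈ wall B then Dfull χ φ else 0) := hwallside.symm
  -- put it together
  have hI1 : ∫⁻ ψ in S ∩ T, D ψ
      = ∫⁻ χ, (if χ ∈ cube then ∫⁻ φ, (if φ ∈ wall B then Dfull χ φ else 0) else 0) := by
    rw [fub _ (hSmeas.inter hTmeas)]
    congr 1
    funext χ
    by_cases hcχ : χ ∈ cube
    · rw [if_pos hcχ]
      congr 1
      funext φ
      rw [hindST, if_pos hcχ]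
    · rw [if_neg hcχ]
      have : ∀ φ, Set.indicator (S ∩ T) D (e.symm (χ, φ)) = 0 := by
        intro φ; rw [hindST, if_neg hcχ]
      simp_rw [this]
      exact MeasureTheory.lintegral_zero
  have hI2 : ∫⁻ ψ in T, D ψ
      = ∫⁻ χ, (if χ ∈ cube then ∫⁻ φ, Dfull χ φ else 0) := by
    rw [fub _ hTmeas]
    congr 1
    funext χ
    by_cases hcχ : χ ∈ cube
    · rw [if_pos hcχ]
      congr 1
      funext φ
      rw [hindT, if_pos hcχ]
    · rw [if_neg hcχ]
      have : ∀ φ, Set.indicator T D (e.symm (χ, φ)) = 0 := by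
        intro φ; rw [hindT, if_neg hcχ]
      simp_rw [this]
      exact MeasureTheory.lintegral_zero
  have hmain : gff d B (wall B) * ∫⁻ ψ in T, D ψ ≤ ∫⁻ ψ in S ∩ T, D ψ := by
    rw [hI1, hI2, ← MeasureTheory.lintegral_const_mul' _ _ hpwtop]
    refine MeasureTheory.lintegral_mono fun χ => ?_
    by_cases hcχ : χ ∈ cube
    · rw [if_pos hcχ, if_pos hcχ]
      exact core χ (fun y => (hcχ y).1)
    · rw [if_neg hcχ, if_neg hcχ, mul_zero]
  -- the denominator is finite and nonzero
  have hI2top : ∫⁻ ψ in T, D ψ ≠ ⊤ := by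
    refine (lt_of_le_of_lt (MeasureTheory.setLIntegral_le_lintegral _ _) ?_).ne
    rw [hD, lintegral_gffDensity hd0 Λ]
    exact ENNReal.ofReal_lt_top
  have hI2ne : ∫⁻ ψ in T, D ψ ≠ 0 := by
    set K : Set (↥Λ → ℝ) := Set.pi Set.univ (fun _ : ↥Λ => Set.Icc (0:ℝ) a) with hK
    have hsub : K ⊆ T := by
      intro ψ hψ x _
      exact hψ x (Set.mem_univ x)
    have hKc : IsCompact K := isCompact_univ_pi fun _ => isCompact_Icc
    have hKne : K.Nonempty := ⟨fun _ => 0, fun x _ => Set.mem_Icc.mpr ⟨le_refl 0, ha.le⟩⟩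
    obtain ⟨ψ₀, _, hψ₀min⟩ :=
      hKc.exists_isMinOn hKne (continuous_gffDensity Λ).continuousOn
    set m : ℝ := gffDensity d Λ ψ₀ with hm
    have hmpos : 0 < m := gffDensity_pos Λ ψ₀
    have hKmeas : MeasurableSet K := MeasurableSet.univ_pi fun _ => measurableSet_Icc
    have h1 : ENNReal.ofReal m * volume K ≤ ∫⁻ ψ in K, D ψ := by
      rw [← MeasureTheory.setLIntegral_const K (ENNReal.ofReal m)]
      refine MeasureTheory.setLIntegral_mono hDmeas fun ψ hψ => ?_
      exact ENNReal.ofReal_le_ofReal (isMinOn_iff.mp hψ₀min ψ hψ)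
    have h2 : ∫⁻ ψ in K, D ψ ≤ ∫⁻ ψ in T, D ψ :=
      MeasureTheory.lintegral_mono_set hsub
    have hvolK : volume K = (ENNReal.ofReal a) ^ (Fintype.card ↥Λ) := by
      rw [hK, MeasureTheory.volume_pi_pi]
      simp [Real.volume_Icc]
    have hne : ENNReal.ofReal m * volume K ≠ 0 := by
      rw [hvolK]
      exact mul_ne_zero (ENNReal.ofReal_pos.mpr hmpos).ne'
        (pow_ne_zero _ (ENNReal.ofReal_pos.mpr ha).ne')
    intro h0
    exact hne (le_antisymm (le_trans h1 (le_trans h2 h0.le)) (zero_le))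
  -- final assembly
  have hgffST : gff d Λ (S ∩ T) = ZΛ⁻¹ * ∫⁻ ψ in S ∩ T, D ψ := by
    rw [gff, Measure.smul_apply, MeasureTheory.withDensity_apply _ (hSmeas.inter hTmeas),
      smul_eq_mul]
  have hgffT : gff d Λ T = ZΛ⁻¹ * ∫⁻ ψ in T, D ψ := by
    rw [gff, Measure.smul_apply, MeasureTheory.withDensity_apply _ hTmeas, smul_eq_mul]
  rw [ge_iff_le, hgffST, hgffT]
  have hinv0 : ZΛ⁻¹ ≠ 0 := ENNReal.inv_ne_zero.mpr hZΛtop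
  have hinvtop : ZΛ⁻¹ ≠ ⊤ := ENNReal.inv_ne_top.mpr hZΛ0
  rw [ENNReal.mul_div_mul_left _ _ hinv0 hinvtop]
  rw [ENNReal.le_div_iff_mul_le (Or.inl hI2ne) (Or.inl hI2top)]
  exact hmain
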